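/- Let V be a finite-dimensional real inner product space, p ≥ 1, let φ be an alternating p-form on V of comass at most one, let W ⊆ V be open, and let ρ : W → ℝ be smooth such that Ω = {x ∈ W : ρ(x) < 0} is bounded with closure contained in W, the frontier of Ω equals {x ∈ W : ρ(x) = 0}, and ∇ρ(x) ≠ 0 for every x with ρ(x) = 0. Assume the boundary ∂Ω is strictly φ-convex, i.e. for every x ∈ ∂Ω and every φ-plane (e_1,…,e_p) with ⟨e_j, ∇ρ(x)⟩ = 0 for all j, one has Σ_{j=1}^p D²ρ(x)(e_j,e_j) > 0. Then there exists a compact set C ⊆ Ω such that the function x ↦ −log(−ρ(x)) is strictly φ-plurisubharmonic at every point of Ω ∖ C. -/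

import Mathlib

open scoped RealInnerProductSpace
open Filter Topology

set_option maxHeartbeats 1000000

/-- A multilinear (here: alternating) map on a finite-dimensional real space is continuous. -/
private lemma alt_cont_aux {V : Type*} [NormedAddCommGroup V] [NormedSpace ℝ V]
    [FiniteDimensional ℝ V] {p : ℕ} (φ : V [⋀^Fin p]→ₗ[ℝ] ℝ) :
    Continuous fun e : Fin p → V => φ e := by
  classical
  set b := Module.finBasis ℝ V with hb
  have key : ∀ e : Fin p → V, φ e =
      ∑ r : Fin p → Fin (Module.finrank ℝ V),
        (∏ i, b.coord (r i) (e i)) * φ (fun i => b (r i)) := by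
    intro e
    have h1 : φ e = φ (fun i => ∑ k, b.repr (e i) k • b k) := by
      congr 1
      exact funext fun i => (b.sum_repr (e i)).symm
    rw [h1]
    rw [show φ (fun i => ∑ k, b.repr (e i) k • b k)
        = φ.toMultilinearMap (fun i => ∑ k, b.repr (e i) k • b k) from rfl]
    rw [φ.toMultilinearMap.map_sum]
    refine Finset.sum_congr rfl fun r _ => ?_
    rw [show (fun i => b.repr (e i) (r i) • b (r i))
        = fun i => (fun i => b.repr (e i) (r i)) i • (fun i => b (r i)) i from rfl]
    rw [φ.toMultilinearMap.map_smul_univ]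
    simp [Module.Basis.coord, smul_eq_mul]
  rw [show (fun e : Fin p → V => (φ e : ℝ))
      = fun e => ∑ r : Fin p → Fin (Module.finrank ℝ V),
        (∏ i, b.coord (r i) (e i)) * φ (fun i => b (r i)) from funext key]
  refine continuous_finset_sum _ fun r _ => ?_
  refine Continuous.mul ?_ continuous_const
  exact continuous_finset_prod _ fun i _ =>
    ((b.coord (r i)).continuous_of_finiteDimensional).comp (continuous_apply i)

/-- **Theorem 4.5** (Harvey–Lawson), Euclidean parallel case.  If `Ω = {ρ < 0}` is a compact
domain with strictly `φ`-convex boundary (the trace of `Hess ρ` on every tangential `φ`-plane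
at the boundary is positive), then `-log(-ρ)` is strictly `φ`-plurisubharmonic outside a
compact subset of `Ω`. -/
theorem minus_log_delta_strictly_psh_near_boundary
    {V : Type*} [NormedAddCommGroup V] [InnerProductSpace ℝ V]
    [FiniteDimensional ℝ V] {p : ℕ} (hp : 1 ≤ p)
    (φ : V [⋀^Fin p]→ₗ[ℝ] ℝ)
    (hcomass : ∀ u : Fin p → V, Orthonormal ℝ u → φ u ≤ 1)
    (W : Set V) (hW : IsOpen W)
    (ρ : V → ℝ) (hρ : ContDiffOn ℝ (⊤ : ℕ∞) ρ W)
    (Ω : Set V) (hΩ : Ω = {x ∈ W | ρ x < 0})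
    (hbd : Bornology.IsBounded Ω) (hcl : closure Ω ⊆ W)
    (hfr : frontier Ω = {x ∈ W | ρ x = 0})
    (hgrad : ∀ x ∈ W, ρ x = 0 → gradient ρ x ≠ 0)
    (hconv : ∀ x ∈ frontier Ω, ∀ e : Fin p → V, Orthonormal ℝ e → φ e = 1 →
      (∀ j, ⟪e j, gradient ρ x⟫ = 0) →
      0 < ∑ j, fderiv ℝ (fderiv ℝ ρ) x (e j) (e j)) :
    ∃ C : Set V, IsCompact C ∧ C ⊆ Ω ∧
      ∀ x ∈ Ω \ C, ∀ e : Fin p → V, Orthonormal ℝ e → φ e = 1 →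
        0 < ∑ j, fderiv ℝ (fderiv ℝ (fun y => -Real.log (-ρ y))) x (e j) (e j) := by
  classical
  -- Basic notation
  set g : V → ℝ := fun y => -Real.log (-ρ y) with hg
  set F : V → V →L[ℝ] ℝ := fderiv ℝ ρ with hF
  set H : V → V →L[ℝ] V →L[ℝ] ℝ := fderiv ℝ (fderiv ℝ ρ) with hH
  -- Ω is open and its points lie in W with ρ < 0
  have hΩW : ∀ x ∈ Ω, x ∈ W := by intro x hx; rw [hΩ] at hx; exact hx.1
  have hΩneg : ∀ x ∈ Ω, ρ x < 0 := by intro x hx; rw [hΩ] at hx; exact hx.2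
  have hΩopen : IsOpen Ω := by
    rw [hΩ]
    have : {x ∈ W | ρ x < 0} = W ∩ ρ ⁻¹' Set.Iio 0 := rfl
    rw [this]
    exact hρ.continuousOn.isOpen_inter_preimage hW isOpen_Iio
  -- smoothness facts
  have hC : ∀ x ∈ W, ContDiffAt ℝ (⊤ : ℕ∞) ρ x := fun x hx =>
    (hρ x hx).contDiffAt (hW.mem_nhds hx)
  have hFd : ∀ x ∈ W, HasFDerivAt ρ (F x) x := fun x hx =>
    ((hC x hx).differentiableAt (by simp)).hasFDerivAt
  have hC1 : ∀ x ∈ W, ContDiffAt ℝ (⊤ : ℕ∞) (fderiv ℝ ρ) x := fun x hx =>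
    (hC x hx).fderiv_right (by exact_mod_cast le_top)
  have hHd : ∀ x ∈ W, HasFDerivAt F (H x) x := fun x hx =>
    ((hC1 x hx).differentiableAt (by simp)).hasFDerivAt
  have hFc : ∀ x ∈ W, ContinuousAt F x := fun x hx => (hC1 x hx).continuousAt
  have hHc : ∀ x ∈ W, ContinuousAt H x := fun x hx =>
    ((hC1 x hx).fderiv_right (m := 0) (by exact_mod_cast le_top)).continuousAt
  have hρc : ∀ x ∈ W, ContinuousAt ρ x := fun x hx => (hC x hx).continuousAt
  -- first derivative of g on Ω
  set G : V → V →L[ℝ] ℝ := fun y => (-ρ y)⁻¹ • F y with hG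
  have hGd : ∀ x ∈ Ω, HasFDerivAt g (G x) x := by
    intro x hx
    have hne : -ρ x ≠ 0 := ne_of_gt (by have := hΩneg x hx; linarith)
    have h1 : HasFDerivAt (fun y => -ρ y) (-(F x)) x := (hFd x (hΩW x hx)).neg
    have h2 := (Real.hasDerivAt_log hne).comp_hasFDerivAt x h1
    have h3 : HasFDerivAt g (-((-ρ x)⁻¹ • -F x)) x := h2.neg
    convert h3 using 1
    ext v
    simp [hG, smul_neg]
  -- second derivative of g on Ω
  have hQ : ∀ x ∈ Ω, ∀ v : V,
      fderiv ℝ (fderiv ℝ g) x v v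
        = ((F x v) ^ 2 + (-ρ x) * (H x v v)) / (ρ x) ^ 2 := by
    intro x hx v
    have hxW := hΩW x hx
    have hrneg := hΩneg x hx
    have hne : -ρ x ≠ 0 := ne_of_gt (by linarith)
    have hrne : ρ x ≠ 0 := ne_of_lt hrneg
    -- derivative of the scalar factor  y ↦ (-ρ y)⁻¹
    have h1 : HasFDerivAt (fun y => -ρ y) (-(F x)) x := (hFd x hxW).neg
    have hcder : HasFDerivAt (fun y => (-ρ y)⁻¹)
        ((-((-ρ x) ^ 2)⁻¹) • (-(F x))) x :=
      (hasDerivAt_inv hne).comp_hasFDerivAt x h1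
    have hGder : HasFDerivAt G
        ((-ρ x)⁻¹ • H x + ((-((-ρ x) ^ 2)⁻¹) • (-(F x))).smulRight (F x)) x :=
      hcder.smul (hHd x hxW)
    have heq : fderiv ℝ g =ᶠ[𝓝 x] G :=
      Filter.eventually_of_mem (hΩopen.mem_nhds hx) fun y hy => (hGd y hy).fderiv
    have h2 : fderiv ℝ (fderiv ℝ g) x = fderiv ℝ G x := heq.fderiv_eq
    rw [h2, hGder.fderiv]
    simp only [ContinuousLinearMap.add_apply, ContinuousLinearMap.smul_apply,
      ContinuousLinearMap.smulRight_apply, ContinuousLinearMap.neg_apply, smul_eq_mul]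
    field_simp
    ring
  -- the "bad" set and the candidate compact set
  set A : Set V := {x | x ∈ Ω ∧ ∃ e : Fin p → V, Orthonormal ℝ e ∧ φ e = 1 ∧
      (∑ j, fderiv ℝ (fderiv ℝ g) x (e j) (e j)) ≤ 0} with hA
  have hAΩ : A ⊆ Ω := fun x hx => hx.1
  -- compactness of the closure of Ω
  have hKcomp : IsCompact (closure Ω) :=
    Metric.isCompact_of_isClosed_isBounded isClosed_closure hbd.closure
  have hCcomp : IsCompact (closure A) :=
    hKcomp.of_isClosed_subset isClosed_closure (closure_mono hAΩ)
  -- bound on the Hessian of ρ on the closure of Ω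
  have hHcont : ContinuousOn H (closure Ω) := fun x hx => (hHc x (hcl hx)).continuousWithinAt
  have himg : IsCompact (H '' closure Ω) := hKcomp.image_of_continuousOn hHcont
  have himgbd : Bornology.IsBounded (H '' closure Ω) := himg.isBounded
  obtain ⟨M, hM'⟩ := himgbd.exists_norm_le
  have hM : ∀ x ∈ closure Ω, ‖H x‖ ≤ M := fun x hx => hM' _ ⟨x, hx, rfl⟩
  -- the set of φ-planes is compact
  set S : Set (Fin p → V) := {e | Orthonormal ℝ e ∧ φ e = 1} with hS
  have hScomp : IsCompact S := by
    have hclosed : IsClosed S := by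
      have h1 : S = (⋂ i, ⋂ j, {e : Fin p → V | ⟪e i, e j⟫ = if i = j then 1 else 0})
          ∩ {e : Fin p → V | φ e = 1} := by
        ext e
        simp only [hS, Set.mem_setOf_eq, Set.mem_inter_iff, Set.mem_iInter,
          orthonormal_iff_ite]
      rw [h1]
      refine IsClosed.inter (isClosed_iInter fun i => isClosed_iInter fun j => ?_)
        (isClosed_eq (alt_cont_aux φ) continuous_const)
      exact isClosed_eq (Continuous.inner (continuous_apply i) (continuous_apply j))
        continuous_const
    have hbdd : Bornology.IsBounded S := by
      refine (Metric.isBounded_closedBall (x := (0 : Fin p → V)) (r := 1)).subset ?_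
      intro e he
      rw [Metric.mem_closedBall, dist_zero_right]
      refine pi_norm_le_iff_of_nonneg zero_le_one |>.2 fun i => ?_
      rw [he.1.1 i]
    exact Metric.isCompact_of_isClosed_isBounded hclosed hbdd
  -- main claim: closure A ⊆ Ω
  have hCsub : closure A ⊆ Ω := by
    intro x₀ hx₀
    by_contra hx₀Ω
    have hx₀fr : x₀ ∈ frontier Ω := by
      have h1 : x₀ ∈ closure Ω := closure_mono hAΩ hx₀
      rw [frontier, hΩopen.interior_eq]
      exact ⟨h1, hx₀Ω⟩
    have hx₀W : x₀ ∈ W := by rw [hfr] at hx₀fr; exact hx₀fr.1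
    have hρx₀ : ρ x₀ = 0 := by rw [hfr] at hx₀fr; exact hx₀fr.2
    -- extract sequences
    obtain ⟨u, hu, hut⟩ := mem_closure_iff_seq_limit.1 hx₀
    have hu' : ∀ n, u n ∈ Ω ∧ ∃ e : Fin p → V, Orthonormal ℝ e ∧ φ e = 1 ∧
        (∑ j, fderiv ℝ (fderiv ℝ g) (u n) (e j) (e j)) ≤ 0 := hu
    choose huΩ en hon hφn hqn using hu'
    have henS : ∀ n, en n ∈ S := fun n => ⟨hon n, hφn n⟩
    obtain ⟨e, heS, ψ, hψ, hψt⟩ := hScomp.tendsto_subseq henS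
    set y : ℕ → V := fun n => u (ψ n) with hy
    set E : ℕ → Fin p → V := fun n => en (ψ n) with hE
    have hyt : Tendsto y atTop (𝓝 x₀) := hut.comp hψ.tendsto_atTop
    have hyΩ : ∀ n, y n ∈ Ω := fun n => huΩ (ψ n)
    have hEt : Tendsto E atTop (𝓝 e) := hψt
    have hEj : ∀ j, Tendsto (fun n => E n j) atTop (𝓝 (e j)) := fun j =>
      ((continuous_apply j).tendsto e).comp hEt
    -- limits of the relevant quantities
    have happ : ∀ (L : ℕ → V →L[ℝ] ℝ) (z : ℕ → V) (L₀ : V →L[ℝ] ℝ) (z₀ : V),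
        Tendsto L atTop (𝓝 L₀) → Tendsto z atTop (𝓝 z₀) →
        Tendsto (fun n => L n (z n)) atTop (𝓝 (L₀ z₀)) := by
      intro L z L₀ z₀ hL hz
      exact (isBoundedBilinearMap_apply.continuous.tendsto (L₀, z₀)).comp (hL.prodMk_nhds hz)
    have happ2 : ∀ (L : ℕ → V →L[ℝ] V →L[ℝ] ℝ) (z : ℕ → V) (L₀ : V →L[ℝ] V →L[ℝ] ℝ) (z₀ : V),
        Tendsto L atTop (𝓝 L₀) → Tendsto z atTop (𝓝 z₀) →
        Tendsto (fun n => L n (z n)) atTop (𝓝 (L₀ z₀)) := by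
      intro L z L₀ z₀ hL hz
      exact (isBoundedBilinearMap_apply.continuous.tendsto (L₀, z₀)).comp (hL.prodMk_nhds hz)
    have hFy : Tendsto (fun n => F (y n)) atTop (𝓝 (F x₀)) := (hFc x₀ hx₀W).tendsto.comp hyt
    have hHy : Tendsto (fun n => H (y n)) atTop (𝓝 (H x₀)) := (hHc x₀ hx₀W).tendsto.comp hyt
    have hρy : Tendsto (fun n => ρ (y n)) atTop (𝓝 0) := by
      have := (hρc x₀ hx₀W).tendsto.comp hyt
      rwa [hρx₀] at this
    have hFj : ∀ j, Tendsto (fun n => F (y n) (E n j)) atTop (𝓝 (F x₀ (e j))) := fun j =>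
      happ _ _ _ _ hFy (hEj j)
    have hHj : ∀ j, Tendsto (fun n => H (y n) (E n j) (E n j)) atTop
        (𝓝 (H x₀ (e j) (e j))) := fun j =>
      happ _ _ _ _ (happ2 _ _ _ _ hHy (hEj j)) (hEj j)
    set s : ℕ → ℝ := fun n => ∑ j, (F (y n) (E n j)) ^ 2 with hs
    set t : ℕ → ℝ := fun n => ∑ j, H (y n) (E n j) (E n j) with ht
    have hst : Tendsto s atTop (𝓝 (∑ j, (F x₀ (e j)) ^ 2)) :=
      tendsto_finset_sum _ fun j _ => (hFj j).pow 2
    have htt : Tendsto t atTop (𝓝 (∑ j, H x₀ (e j) (e j))) :=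
      tendsto_finset_sum _ fun j _ => hHj j
    -- from the hypothesis Q ≤ 0 : s n + (-ρ) t n ≤ 0
    have hkey : ∀ n, s n + (-ρ (y n)) * t n ≤ 0 := by
      intro n
      have hq : (∑ j, fderiv ℝ (fderiv ℝ g) (y n) ((E n) j) ((E n) j)) ≤ 0 := hqn (ψ n)
      have hrneg := hΩneg _ (hyΩ n)
      have hrpos : (0:ℝ) < (ρ (y n)) ^ 2 := by nlinarith
      have hsum : (∑ j, fderiv ℝ (fderiv ℝ g) (y n) ((E n) j) ((E n) j))
          = (s n + (-ρ (y n)) * t n) / (ρ (y n)) ^ 2 := by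
        simp only [hs, ht]
        rw [Finset.sum_congr rfl fun j _ => hQ (y n) (hyΩ n) (E n j)]
        rw [← Finset.sum_div, Finset.sum_add_distrib, ← Finset.mul_sum]
      rw [hsum] at hq
      have h2 : (s n + (-ρ (y n)) * t n) / (ρ (y n)) ^ 2 * ((ρ (y n)) ^ 2)
          ≤ 0 * ((ρ (y n)) ^ 2) := mul_le_mul_of_nonneg_right hq hrpos.le
      rwa [div_mul_cancel₀ _ (ne_of_gt hrpos), zero_mul] at h2
    -- bound : s n ≤ (-ρ (y n)) * (p * M)
    have hsnn : ∀ n, 0 ≤ s n := fun n => Finset.sum_nonneg fun j _ => sq_nonneg _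
    have htb : ∀ n, |t n| ≤ p * M := by
      intro n
      have h1 : ∀ j, |H (y n) (E n j) (E n j)| ≤ M := by
        intro j
        have h2 := (H (y n)).le_opNorm₂ (E n j) (E n j)
        have h3 : ‖E n j‖ = 1 := (hon (ψ n)).1 j
        have h4 : ‖H (y n)‖ ≤ M := hM _ (subset_closure (hyΩ n))
        calc |H (y n) (E n j) (E n j)| = ‖H (y n) (E n j) (E n j)‖ := rfl
          _ ≤ ‖H (y n)‖ * ‖E n j‖ * ‖E n j‖ := h2
          _ = ‖H (y n)‖ := by rw [h3]; ring
          _ ≤ M := h4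
      calc |t n| ≤ ∑ j, |H (y n) (E n j) (E n j)| := Finset.abs_sum_le_sum_abs _ _
        _ ≤ ∑ _j : Fin p, M := Finset.sum_le_sum fun j _ => h1 j
        _ = p * M := by simp [mul_comm]
    have hsb : ∀ n, s n ≤ (-ρ (y n)) * (p * M) := by
      intro n
      have h1 := hkey n
      have h2 := htb n
      have hrneg := hΩneg _ (hyΩ n)
      have ha : (0:ℝ) < -ρ (y n) := by linarith
      nlinarith [abs_le.1 h2]
    -- conclude s → 0, so the limit plane is tangential
    have hs0 : (∑ j, (F x₀ (e j)) ^ 2) ≤ 0 := by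
      have hrhs : Tendsto (fun n => (-ρ (y n)) * (p * M)) atTop (𝓝 0) := by
        have := (hρy.neg).mul_const ((p : ℝ) * M)
        simpa using this
      exact le_of_tendsto_of_tendsto hst hrhs (Filter.Eventually.of_forall hsb)
    have hFj0 : ∀ j, F x₀ (e j) = 0 := by
      intro j
      have h1 : (∑ j, (F x₀ (e j)) ^ 2) = 0 :=
        le_antisymm hs0 (Finset.sum_nonneg fun j _ => sq_nonneg _)
      have h2 := (Finset.sum_eq_zero_iff_of_nonneg
        (fun j _ => sq_nonneg (F x₀ (e j)))).1 h1 j (Finset.mem_univ j)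
      exact pow_eq_zero_iff (two_ne_zero).elim |>.1 h2
    -- tangentiality in terms of the gradient
    have htang : ∀ j, ⟪e j, gradient ρ x₀⟫ = 0 := by
      intro j
      rw [real_inner_comm]
      rw [gradient, InnerProductSpace.toDual_symm_apply]
      exact hFj0 j
    -- strict convexity gives a positive limit for t
    have ht₀ : 0 < ∑ j, H x₀ (e j) (e j) := hconv x₀ hx₀fr e heS.1 heS.2 htang
    have hev : ∀ᶠ n in atTop, 0 < t n := htt.eventually (eventually_gt_nhds ht₀)
    obtain ⟨n, hn⟩ := hev.exists
    -- contradiction with hkey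
    have hrneg := hΩneg _ (hyΩ n)
    have h1 := hkey n
    have := hsnn n
    nlinarith
  refine ⟨closure A, hCcomp, hCsub, ?_⟩
  intro x hx e hone hφe
  have hxA : x ∉ A := fun h => hx.2 (subset_closure h)
  rw [hA, Set.mem_setOf_eq] at hxA
  push_neg at hxA
  exact hxA hx.1 e hone hφe
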